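/- Let K₁, …, Kₙ be non-empty finite sets, each of cardinality at most k (with k ≥ 2), equip ∏_{i=1}^n Kᵢ with the normalized Hamming metric d_n(x,y) := (1/n)·|{i : xᵢ ≠ yᵢ}|, let μ and ν be probability measures on ∏ᵢ Kᵢ, let λ be any coupling of μ and ν, and set δ := ∫ d_n(x,y) λ(dx,dy). Then |TC(μ) − TC(ν)| ≤ 2·( H(δ, 1−δ) + δ·log(k−1) )·n, where H(δ,1−δ) = −δ log δ − (1−δ) log(1−δ) is the binary entropy. -/

import Mathlib

open MeasureTheory Real

namespace Corr

variable {Ω : Type*} [MeasurableSpace Ω]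

/-- Shannon entropy of a finite-valued random variable. -/
noncomputable def shEnt {K : Type*} [Fintype K] (μ : Measure Ω) (X : Ω → K) : ℝ :=
  ∑ k : K, Real.negMulLog ((μ (X ⁻¹' {k})).toReal)

/-- Conditional Shannon entropy `H(X | Y)`. -/
noncomputable def condEnt {K L : Type*} [Fintype K] [Fintype L]
    (μ : Measure Ω) (X : Ω → K) (Y : Ω → L) : ℝ :=
  shEnt μ (fun ω => (X ω, Y ω)) - shEnt μ Y

/-- Mutual information `I(X ; Y)`. -/
noncomputable def mutInfo {K L : Type*} [Fintype K] [Fintype L]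
    (μ : Measure Ω) (X : Ω → K) (Y : Ω → L) : ℝ :=
  shEnt μ X + shEnt μ Y - shEnt μ (fun ω => (X ω, Y ω))

/-- Conditional mutual information `I(X ; Y | Z)`. -/
noncomputable def condMutInfo {K L M : Type*} [Fintype K] [Fintype L] [Fintype M]
    (μ : Measure Ω) (X : Ω → K) (Y : Ω → L) (Z : Ω → M) : ℝ :=
  condEnt μ X Z + condEnt μ Y Z - condEnt μ (fun ω => (X ω, Y ω)) Z

/-- The joint random variable of a family of random variables. -/
def joint {ι : Type*} {K : ι → Type*} (X : ∀ i, Ω → K i) : Ω → ∀ i, K i :=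
  fun ω i => X i ω

/-- Total correlation `TC(X₁;…;Xₙ)`. -/
noncomputable def TC {ι : Type*} [Fintype ι] [DecidableEq ι] {K : ι → Type*}
    [∀ i, Fintype (K i)] (μ : Measure Ω) (X : ∀ i, Ω → K i) : ℝ :=
  (∑ i, shEnt μ (X i)) - shEnt μ (joint X)

/-- Dual total correlation `DTC(X₁;…;Xₙ)`. -/
noncomputable def DTC {ι : Type*} [Fintype ι] [DecidableEq ι] {K : ι → Type*}
    [∀ i, Fintype (K i)] (μ : Measure Ω) (X : ∀ i, Ω → K i) : ℝ :=
  shEnt μ (joint X) - ∑ i, condEnt μ (X i) (joint fun j : {j : ι // j ≠ i} => X j.1)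

/-- Conditional total correlation `TC(X₁;…;Xₙ | Y)`. -/
noncomputable def condTC {ι : Type*} [Fintype ι] [DecidableEq ι] {K : ι → Type*}
    [∀ i, Fintype (K i)] {L : Type*} [Fintype L]
    (μ : Measure Ω) (X : ∀ i, Ω → K i) (Y : Ω → L) : ℝ :=
  (∑ i, condEnt μ (X i) Y) - condEnt μ (joint X) Y

/-- Conditional dual total correlation `DTC(X₁;…;Xₙ | Y)`. -/
noncomputable def condDTC {ι : Type*} [Fintype ι] [DecidableEq ι] {K : ι → Type*}
    [∀ i, Fintype (K i)] {L : Type*} [Fintype L]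
    (μ : Measure Ω) (X : ∀ i, Ω → K i) (Y : Ω → L) : ℝ :=
  condEnt μ (joint X) Y -
    ∑ i, condEnt μ (X i)
      (fun ω => (joint (fun j : {j : ι // j ≠ i} => X j.1) ω, Y ω))

/-- The normalized Hamming distance `d_n(x,y) = |{i : xᵢ ≠ yᵢ}| / n` on `∏ i, K i`. -/
noncomputable def hammingDist {n : ℕ} {K : Fin n → Type*} [∀ i, DecidableEq (K i)]
    (x y : ∀ i, K i) : ℝ :=
  ((Finset.univ.filter fun i => x i ≠ y i).card : ℝ) / n

set_option linter.unusedSectionVars false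
set_option maxHeartbeats 2000000

section FSum
variable {Ωb : Type*} [Fintype Ωb] {K L M : Type*} [Fintype K] [Fintype L] [Fintype M]
  [DecidableEq K] [DecidableEq L] [DecidableEq M]

/-- fiber sum of a mass function. -/
def fsum (m : Ωb → ℝ) (X : Ωb → K) (k : K) : ℝ := ∑ ω, if X ω = k then m ω else 0

lemma fsum_nonneg {m : Ωb → ℝ} (hm : ∀ ω, 0 ≤ m ω) (X : Ωb → K) (k : K) : 0 ≤ fsum m X k :=
  Finset.sum_nonneg fun ω _ => by by_cases h : X ω = k <;> simp [h, hm ω]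

lemma sum_if_congr (m : Ωb → ℝ) {P Q : Ωb → Prop} [DecidablePred P] [DecidablePred Q]
    (h : ∀ ω, P ω ↔ Q ω) :
    ∑ ω, (if P ω then m ω else 0) = ∑ ω, (if Q ω then m ω else 0) :=
  Finset.sum_congr rfl fun ω _ => if_congr (h ω) rfl rfl

/-- marginalizing out one coordinate of an if-condition. -/
lemma sum_if_and (m : Ωb → ℝ) (V : Ωb → L) (c : Ωb → Prop) [DecidablePred c] :
    ∑ l, ∑ ω, (if V ω = l ∧ c ω then m ω else 0) = ∑ ω, (if c ω then m ω else 0) := by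
  rw [Finset.sum_comm]
  refine Finset.sum_congr rfl fun ω _ => ?_
  by_cases h : c ω
  · simp only [h, and_true]
    have := Finset.sum_ite_eq' Finset.univ (V ω) (fun _ => m ω)
    simpa [h] using this
  · simp [h]

lemma fsum_pair_right (m : Ωb → ℝ) (X : Ωb → K) (Y : Ωb → L) (k : K) :
    ∑ l, fsum m (fun ω => (X ω, Y ω)) (k, l) = fsum m X k := by
  unfold fsum
  have h1 : ∀ l : L, (∑ ω, if (X ω, Y ω) = (k, l) then m ω else 0)
      = ∑ ω, if Y ω = l ∧ X ω = k then m ω else 0 := fun l =>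
    sum_if_congr m fun ω => by simp [Prod.ext_iff, and_comm]
  simp only [h1]
  exact sum_if_and m Y (fun ω => X ω = k)

lemma fsum_pair_left (m : Ωb → ℝ) (X : Ωb → K) (Y : Ωb → L) (l : L) :
    ∑ k, fsum m (fun ω => (X ω, Y ω)) (k, l) = fsum m Y l := by
  unfold fsum
  have h1 : ∀ k : K, (∑ ω, if (X ω, Y ω) = (k, l) then m ω else 0)
      = ∑ ω, if X ω = k ∧ Y ω = l then m ω else 0 := fun k =>
    sum_if_congr m fun ω => by simp [Prod.ext_iff]
  simp only [h1]
  exact sum_if_and m X (fun ω => Y ω = l)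

lemma sum_fsum (m : Ωb → ℝ) (X : Ωb → K) : ∑ k, fsum m X k = ∑ ω, m ω := by
  unfold fsum
  have h1 : ∀ k : K, (∑ ω, if X ω = k then m ω else 0)
      = ∑ ω, if X ω = k ∧ True then m ω else 0 := fun k =>
    sum_if_congr m fun ω => by simp
  simp only [h1]
  rw [sum_if_and m X (fun _ => True)]; simp

end FSum

section Ent
variable {Ωb : Type*} [Fintype Ωb] {K L M : Type*} [Fintype K] [Fintype L] [Fintype M]
  [DecidableEq K] [DecidableEq L] [DecidableEq M]

noncomputable def entm (m : Ωb → ℝ) (X : Ωb → K) : ℝ := ∑ k, negMulLog (fsum m X k)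

lemma entm_comp_inj (m : Ωb → ℝ) {g : K → L} (hg : Function.Injective g) (X : Ωb → K) :
    entm m (fun ω => g (X ω)) = entm m X := by
  unfold entm
  rw [← Finset.sum_subset (Finset.subset_univ (Finset.univ.image g))]
  · rw [Finset.sum_image (fun a _ b _ h => hg h)]
    refine Finset.sum_congr rfl fun k _ => ?_
    congr 1
    exact sum_if_congr m fun ω => by simp [hg.eq_iff]
  · intro l _ hl
    have h0 : fsum m (fun ω => g (X ω)) l = 0 := by
      refine Finset.sum_eq_zero fun ω _ => ?_
      have : g (X ω) ≠ l := fun h => hl (by simp [← h])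
      simp [this]
    simp [h0]

lemma negMulLog_sum_le {ι : Type*} (s : Finset ι) (f : ι → ℝ) (hf : ∀ i ∈ s, 0 ≤ f i) :
    negMulLog (∑ i ∈ s, f i) ≤ ∑ i ∈ s, negMulLog (f i) := by
  have hS : ∀ i ∈ s, f i ≤ ∑ j ∈ s, f j := fun i hi => Finset.single_le_sum hf hi
  have key : ∑ i ∈ s, f i * log (f i) ≤ (∑ i ∈ s, f i) * log (∑ j ∈ s, f j) := by
    rw [Finset.sum_mul]
    refine Finset.sum_le_sum fun i hi => ?_
    rcases eq_or_lt_of_le (hf i hi) with h | h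
    · simp [← h]
    · exact mul_le_mul_of_nonneg_left (Real.log_le_log h (hS i hi)) (hf i hi)
  have : -((∑ i ∈ s, f i) * log (∑ j ∈ s, f j)) ≤ -∑ i ∈ s, f i * log (f i) := by linarith
  calc negMulLog (∑ i ∈ s, f i) = -((∑ i ∈ s, f i) * log (∑ j ∈ s, f j)) := by
        rw [negMulLog, neg_mul]
    _ ≤ -∑ i ∈ s, f i * log (f i) := this
    _ = ∑ i ∈ s, negMulLog (f i) := by
        rw [← Finset.sum_neg_distrib]
        exact Finset.sum_congr rfl fun i _ => by rw [negMulLog, neg_mul]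

lemma entm_le_pair (m : Ωb → ℝ) (hm : ∀ ω, 0 ≤ m ω) (X : Ωb → K) (Y : Ωb → L) :
    entm m X ≤ entm m (fun ω => (X ω, Y ω)) := by
  unfold entm
  rw [Fintype.sum_prod_type]
  refine Finset.sum_le_sum fun k _ => ?_
  rw [← fsum_pair_right m X Y k]
  exact negMulLog_sum_le Finset.univ _ fun l _ => fsum_nonneg hm _ _

end Ent

section Gibbs
variable {K L M : Type*} [Fintype K] [Fintype L] [Fintype M]

lemma negMulLog_expand1 {A : Type*} [Fintype A] (f : A → ℝ) (c : ℝ)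
    (hc : c = ∑ a, f a) : negMulLog c = ∑ a, f a * (- log c) := by
  calc negMulLog c = c * (-log c) := by rw [negMulLog]; ring
    _ = (∑ a, f a) * (-log c) := by rw [← hc]
    _ = ∑ a, f a * (-log c) := Finset.sum_mul _ _ _

lemma negMulLog_expand2 {A B : Type*} [Fintype A] [Fintype B] (f : A → B → ℝ) (c : ℝ)
    (hc : c = ∑ a, ∑ b, f a b) : negMulLog c = ∑ a, ∑ b, f a b * (- log c) := by
  calc negMulLog c = c * (-log c) := by rw [negMulLog]; ring
    _ = (∑ a, ∑ b, f a b) * (-log c) := by rw [← hc]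
    _ = ∑ a, ∑ b, f a b * (-log c) := by
        rw [Finset.sum_mul]
        exact Finset.sum_congr rfl fun a _ => Finset.sum_mul _ _ _

/-- abstract conditional subadditivity for joint pmfs (not necessarily normalized). -/
lemma gibbs_condSubadd (r : K → L → M → ℝ) (hr : ∀ k l m, 0 ≤ r k l m) :
    (∑ w, ∑ k, ∑ l, negMulLog (r k l w)) + ∑ w, negMulLog (∑ k, ∑ l, r k l w) ≤
      (∑ w, ∑ k, negMulLog (∑ l, r k l w)) + ∑ w, ∑ l, negMulLog (∑ k, r k l w) := by
  set p : K → M → ℝ := fun k w => ∑ l, r k l w with hp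
  set q : L → M → ℝ := fun l w => ∑ k, r k l w with hq
  set s : M → ℝ := fun w => ∑ k, ∑ l, r k l w with hs
  have hp0 : ∀ k w, 0 ≤ p k w := fun k w => Finset.sum_nonneg fun l _ => hr k l w
  have hq0 : ∀ l w, 0 ≤ q l w := fun l w => Finset.sum_nonneg fun k _ => hr k l w
  have hs0 : ∀ w, 0 ≤ s w := fun w =>
    Finset.sum_nonneg fun k _ => Finset.sum_nonneg fun l _ => hr k l w
  have hrp : ∀ k l w, r k l w ≤ p k w := fun k l w =>
    Finset.single_le_sum (fun l _ => hr k l w) (Finset.mem_univ l)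
  have hrq : ∀ k l w, r k l w ≤ q l w := fun k l w =>
    Finset.single_le_sum (f := fun k => r k l w) (fun k _ => hr k l w) (Finset.mem_univ k)
  have hps : ∀ k w, p k w ≤ s w := fun k w =>
    Finset.single_le_sum (f := fun k => p k w) (fun k _ => hp0 k w) (Finset.mem_univ k)
  have e1 : ∀ w, negMulLog (s w) = ∑ k, ∑ l, r k l w * (- log (s w)) := fun w =>
    negMulLog_expand2 (fun k l => r k l w) (s w) rfl
  have e2 : ∀ w k, negMulLog (p k w) = ∑ l, r k l w * (- log (p k w)) := fun w k =>
    negMulLog_expand1 (fun l => r k l w) (p k w) rfl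
  have e3 : ∀ w l, negMulLog (q l w) = ∑ k, r k l w * (- log (q l w)) := fun w l =>
    negMulLog_expand1 (fun k => r k l w) (q l w) rfl
  rw [show (∑ w, ∑ k, negMulLog (∑ l, r k l w)) = ∑ w, ∑ k, ∑ l, r k l w * (- log (p k w))
      from Finset.sum_congr rfl fun w _ => Finset.sum_congr rfl fun k _ => e2 w k]
  rw [show (∑ w, ∑ l, negMulLog (∑ k, r k l w)) = ∑ w, ∑ k, ∑ l, r k l w * (- log (q l w))
      from Finset.sum_congr rfl fun w _ => (Finset.sum_congr rfl fun l _ => e3 w l).trans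
        Finset.sum_comm]
  rw [show (∑ w, negMulLog (∑ k, ∑ l, r k l w)) = ∑ w, ∑ k, ∑ l, r k l w * (- log (s w))
      from Finset.sum_congr rfl fun w _ => e1 w]
  rw [← Finset.sum_add_distrib, ← Finset.sum_add_distrib]
  refine Finset.sum_le_sum fun w _ => ?_
  have key : ∀ k l, negMulLog (r k l w) + r k l w * (- log (s w)) ≤
      (r k l w * (- log (p k w)) + r k l w * (- log (q l w))) +
        (p k w * q l w / s w - r k l w) := by
    intro k l
    rcases eq_or_lt_of_le (hr k l w) with h0 | h0
    · rw [← h0]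
      simp only [negMulLog_zero, zero_mul, add_zero, zero_add, zero_mul, sub_zero]
      exact div_nonneg (mul_nonneg (hp0 k w) (hq0 l w)) (hs0 w)
    · have hp' : 0 < p k w := lt_of_lt_of_le h0 (hrp k l w)
      have hq' : 0 < q l w := lt_of_lt_of_le h0 (hrq k l w)
      have hs' : 0 < s w := lt_of_lt_of_le hp' (hps k w)
      have harg : 0 < p k w * q l w / (s w * r k l w) := by positivity
      have hlog := Real.log_le_sub_one_of_pos harg
      have hexpand : log (p k w * q l w / (s w * r k l w))
          = log (p k w) + log (q l w) - log (s w) - log (r k l w) := by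
        rw [Real.log_div (by positivity) (by positivity), Real.log_mul hp'.ne' hq'.ne',
          Real.log_mul hs'.ne' h0.ne']
        ring
      have h2 : r k l w * (log (p k w) + log (q l w) - log (s w) - log (r k l w))
          ≤ r k l w * (p k w * q l w / (s w * r k l w) - 1) := by
        rw [← hexpand]
        exact mul_le_mul_of_nonneg_left (by linarith) (hr k l w)
      have h3 : r k l w * (p k w * q l w / (s w * r k l w) - 1)
          = p k w * q l w / s w - r k l w := by
        field_simp
      rw [negMulLog]
      nlinarith [h2, h3]
  have hsum1 : ∑ k, p k w = s w := rfl
  have hsum2 : ∑ l, q l w = s w := Finset.sum_comm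
  have expand : ∑ k, ∑ l, (p k w * q l w / s w - r k l w) = s w * s w / s w - s w := by
    rw [show ∑ k, ∑ l, (p k w * q l w / s w - r k l w)
        = (∑ k, ∑ l, p k w * q l w / s w) - ∑ k, ∑ l, r k l w by
      rw [← Finset.sum_sub_distrib]
      exact Finset.sum_congr rfl fun k _ => by rw [← Finset.sum_sub_distrib]]
    congr 1
    rw [show (∑ k, ∑ l, p k w * q l w / s w) = ∑ k, p k w * (∑ l, q l w) / s w from
      Finset.sum_congr rfl fun k _ => by rw [← Finset.sum_div, ← Finset.mul_sum]]
    rw [show (∑ k, p k w * (∑ l, q l w) / s w) = (∑ k, p k w) * (∑ l, q l w) / s w by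
      rw [← Finset.sum_div, ← Finset.sum_mul]]
    rw [hsum1, hsum2]
  have hfin : s w * s w / s w - s w ≤ 0 := by
    rcases eq_or_lt_of_le (hs0 w) with h | h
    · rw [← h]; simp
    · rw [mul_div_assoc, div_self h.ne', mul_one]; simp
  calc (∑ k, ∑ l, negMulLog (r k l w)) + ∑ k, ∑ l, r k l w * (- log (s w))
      = ∑ k, ∑ l, (negMulLog (r k l w) + r k l w * (- log (s w))) := by
        rw [← Finset.sum_add_distrib]
        exact Finset.sum_congr rfl fun k _ => by rw [← Finset.sum_add_distrib]
    _ ≤ ∑ k, ∑ l, ((r k l w * (- log (p k w)) + r k l w * (- log (q l w))) +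
        (p k w * q l w / s w - r k l w)) :=
        Finset.sum_le_sum fun k _ => Finset.sum_le_sum fun l _ => key k l
    _ = (∑ k, ∑ l, (r k l w * (- log (p k w)) + r k l w * (- log (q l w))))
        + ∑ k, ∑ l, (p k w * q l w / s w - r k l w) := by
        rw [← Finset.sum_add_distrib]
        exact Finset.sum_congr rfl fun k _ => by rw [← Finset.sum_add_distrib]
    _ ≤ ∑ k, ∑ l, (r k l w * (- log (p k w)) + r k l w * (- log (q l w))) := by
        rw [expand] at *; linarith
    _ = (∑ k, ∑ l, r k l w * (- log (p k w))) + ∑ k, ∑ l, r k l w * (- log (q l w)) := by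
        rw [← Finset.sum_add_distrib]
        exact Finset.sum_congr rfl fun k _ => by rw [Finset.sum_add_distrib]

end Gibbs

lemma sum_negMulLog_le_log_card {K : Type*} (s : Finset K) (hs : s.Nonempty) (u : K → ℝ)
    (hu : ∀ a ∈ s, 0 ≤ u a) (h1 : ∑ a ∈ s, u a = 1) :
    ∑ a ∈ s, negMulLog (u a) ≤ log s.card := by
  have hc : (0:ℝ) < s.card := by exact_mod_cast Finset.card_pos.mpr hs
  have key : ∀ a ∈ s, negMulLog (u a) - u a * log s.card ≤ 1 / s.card - u a := by
    intro a ha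
    rcases eq_or_lt_of_le (hu a ha) with h0 | h0
    · rw [← h0]
      simp only [negMulLog_zero, zero_mul, sub_zero]
      positivity
    · have harg : (0:ℝ) < 1 / (u a * s.card) := by positivity
      have hlog := Real.log_le_sub_one_of_pos harg
      have hexp : log (1 / (u a * s.card)) = - log (u a) - log s.card := by
        rw [one_div, Real.log_inv, Real.log_mul h0.ne' hc.ne']
        ring
      rw [hexp] at hlog
      have := mul_le_mul_of_nonneg_left hlog (hu a ha)
      rw [negMulLog]
      have hcancel : u a * (1 / (u a * s.card) - 1) = 1 / s.card - u a := by
        field_simp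
      nlinarith [this, hcancel]
  have : ∑ a ∈ s, (negMulLog (u a) - u a * log s.card) ≤ ∑ a ∈ s, (1 / s.card - u a) :=
    Finset.sum_le_sum key
  rw [Finset.sum_sub_distrib, Finset.sum_sub_distrib, ← Finset.sum_mul, h1, one_mul,
    Finset.sum_const, nsmul_eq_mul] at this
  have h2 : (s.card : ℝ) * (1 / (s.card:ℝ)) - 1 = 0 := by
    field_simp
    ring
  linarith

/-- Fano's inequality at the pmf level. -/
lemma fano_pmf {K : Type*} [Fintype K] [DecidableEq K] {k' : ℕ} (hk : 2 ≤ k')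
    (hcard : Fintype.card K ≤ k') (r : K → K → ℝ) (hr : ∀ a b, 0 ≤ r a b)
    (htot : ∑ b, ∑ a, r a b = 1) :
    (∑ b, ∑ a, negMulLog (r a b)) - (∑ b, negMulLog (∑ a, r a b))
      ≤ qaryEntropy k' (∑ b, ((∑ a, r a b) - r b b)) := by
  classical
  set q : K → ℝ := fun b => ∑ a, r a b with hqdef
  have hq0 : ∀ b, 0 ≤ q b := fun b => Finset.sum_nonneg fun a _ => hr a b
  have hrq : ∀ a b, r a b ≤ q b := fun a b =>
    Finset.single_le_sum (f := fun a => r a b) (fun a _ => hr a b) (Finset.mem_univ a)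
  set ε : K → ℝ := fun b => if q b = 0 then 0 else 1 - r b b / q b with hεdef
  have hε0 : ∀ b, 0 ≤ ε b := by
    intro b
    rw [hεdef]
    by_cases h : q b = 0
    · simp [h]
    · have hq' : 0 < q b := lt_of_le_of_ne (hq0 b) (Ne.symm h)
      simp only [h, if_false]
      have : r b b / q b ≤ 1 := (div_le_one hq').mpr (hrq b b)
      linarith
  have hε1 : ∀ b, ε b ≤ 1 := by
    intro b
    rw [hεdef]
    by_cases h : q b = 0
    · simp [h]
    · simp only [h, if_false]
      have : 0 ≤ r b b / q b := div_nonneg (hr b b) (hq0 b)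
      linarith
  -- Step A : per-b bound
  have stepA : ∀ b, (∑ a, negMulLog (r a b)) - negMulLog (q b)
      ≤ q b * qaryEntropy k' (ε b) := by
    intro b
    by_cases h : q b = 0
    · have hall : ∀ a, r a b = 0 := by
        intro a
        have := (Finset.sum_eq_zero_iff_of_nonneg (fun a _ => hr a b)).mp h
        exact this a (Finset.mem_univ a)
      simp [hall, h, hεdef]
    · have hq' : 0 < q b := lt_of_le_of_ne (hq0 b) (Ne.symm h)
      set t : K → ℝ := fun a => r a b / q b with htdef
      have ht0 : ∀ a, 0 ≤ t a := fun a => div_nonneg (hr a b) (hq0 b)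
      have htsum : ∑ a, t a = 1 := by
        rw [htdef, ← Finset.sum_div, hqdef]
        field_simp
        exact div_self h
      have hrab : ∀ a, r a b = q b * t a := by
        intro a; rw [htdef]; field_simp
      have expand : ∑ a, negMulLog (r a b)
          = negMulLog (q b) + q b * ∑ a, negMulLog (t a) := by
        calc ∑ a, negMulLog (r a b) = ∑ a, (t a * negMulLog (q b) + q b * negMulLog (t a)) := by
              refine Finset.sum_congr rfl fun a _ => ?_
              rw [hrab a, negMulLog_mul]
          _ = (∑ a, t a) * negMulLog (q b) + q b * ∑ a, negMulLog (t a) := by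
              rw [Finset.sum_add_distrib, Finset.sum_mul, Finset.mul_sum]
          _ = negMulLog (q b) + q b * ∑ a, negMulLog (t a) := by rw [htsum, one_mul]
      rw [expand]
      have hεb : ε b = 1 - t b := by rw [hεdef, htdef]; simp [h]
      have hmain : ∑ a, negMulLog (t a) ≤ qaryEntropy k' (ε b) := by
        have hsplit : ∑ a, negMulLog (t a)
            = negMulLog (t b) + ∑ a ∈ Finset.univ.erase b, negMulLog (t a) := by
          rw [← Finset.add_sum_erase _ _ (Finset.mem_univ b)]
        have herase_sum : ∑ a ∈ Finset.univ.erase b, t a = ε b := by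
          have h' := Finset.add_sum_erase Finset.univ t (Finset.mem_univ b)
          rw [htsum] at h'
          rw [hεb]
          linarith
        rcases eq_or_lt_of_le (hε0 b) with hε | hε
        · -- ε b = 0
          have hz : ∀ a ∈ Finset.univ.erase b, t a = 0 := by
            intro a ha
            exact (Finset.sum_eq_zero_iff_of_nonneg (fun a _ => ht0 a)).mp
              (by rw [herase_sum, ← hε]) a ha
          have htb : t b = 1 := by rw [hεb] at hε; linarith
          rw [hsplit, htb, Finset.sum_eq_zero fun a ha => by
            rw [hz a ha]; exact negMulLog_zero]
          simp [← hε]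
        · -- ε b > 0
          have hne : (Finset.univ.erase b).Nonempty := by
            by_contra hempty
            rw [Finset.not_nonempty_iff_eq_empty] at hempty
            rw [hempty, Finset.sum_empty] at herase_sum
            linarith
          have hcard1 : 1 ≤ (Finset.univ.erase b).card := Finset.card_pos.mpr hne
          have hcard2 : (Finset.univ.erase b).card = Fintype.card K - 1 := by
            rw [Finset.card_erase_of_mem (Finset.mem_univ b), Finset.card_univ]
          have hsub : ∑ a ∈ Finset.univ.erase b, negMulLog (t a)
              ≤ negMulLog (ε b) + ε b * log ((Finset.univ.erase b).card) := by
            have hu : ∀ a ∈ Finset.univ.erase b, 0 ≤ t a / ε b :=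
              fun a _ => div_nonneg (ht0 a) (hε0 b)
            have hu1 : ∑ a ∈ Finset.univ.erase b, t a / ε b = 1 := by
              rw [← Finset.sum_div, herase_sum, div_self hε.ne']
            have hme := sum_negMulLog_le_log_card _ hne _ hu hu1
            have hexp : ∀ a ∈ Finset.univ.erase b, negMulLog (t a)
                = t a / ε b * negMulLog (ε b) + ε b * negMulLog (t a / ε b) := by
              intro a ha
              have : t a = ε b * (t a / ε b) := by field_simp
              rw [show negMulLog (t a) = negMulLog (ε b * (t a / ε b)) from by rw [← this],
                negMulLog_mul]
            rw [Finset.sum_congr rfl hexp, Finset.sum_add_distrib, ← Finset.sum_mul,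
              ← Finset.mul_sum, hu1, one_mul]
            have := mul_le_mul_of_nonneg_left hme (hε0 b)
            linarith
          have hlogle : log ((Finset.univ.erase b).card) ≤ log ((k' : ℝ) - 1) := by
            apply Real.log_le_log (by exact_mod_cast hcard1)
            rw [hcard2]
            have h1 : (1:ℕ) ≤ Fintype.card K := by
              rw [hcard2] at hcard1; omega
            have : Fintype.card K - 1 ≤ k' - 1 := by omega
            calc ((Fintype.card K - 1 : ℕ) : ℝ) ≤ ((k' - 1 : ℕ) : ℝ) := by exact_mod_cast this
              _ = (k' : ℝ) - 1 := by
                  have : (1:ℕ) ≤ k' := by omega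
                  push_cast [this]
                  ring
          have hqary : qaryEntropy k' (ε b)
              = negMulLog (ε b) + negMulLog (1 - ε b) + ε b * log ((k' : ℝ) - 1) := by
            rw [qaryEntropy, binEntropy_eq_negMulLog_add_negMulLog_one_sub]
            have hcast : ((k' - 1 : ℤ) : ℝ) = (k' : ℝ) - 1 := by push_cast; ring
            rw [hcast]
            ring
          rw [hsplit, hqary]
          have h1ε : negMulLog (t b) = negMulLog (1 - ε b) := by rw [hεb, sub_sub_cancel]
          have hmul := mul_le_mul_of_nonneg_left hlogle (hε0 b)
          linarith [hsub]
      calc negMulLog (q b) + q b * ∑ a, negMulLog (t a) - negMulLog (q b)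
          = q b * ∑ a, negMulLog (t a) := by ring
        _ ≤ q b * qaryEntropy k' (ε b) := mul_le_mul_of_nonneg_left hmain (hq0 b)
  -- Step B : Jensen
  have hqsum : ∑ b, q b = 1 := htot
  have stepB : ∑ b, q b * qaryEntropy k' (ε b) ≤ qaryEntropy k' (∑ b, q b * ε b) := by
    have := (strictConcaveOn_qaryEntropy (q := k')).concaveOn.le_map_sum
      (t := Finset.univ) (w := q) (p := ε) (fun b _ => hq0 b) hqsum
      (fun b _ => Set.mem_Icc.mpr ⟨hε0 b, hε1 b⟩)
    simpa using this
  -- Step C : identify the argument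
  have stepC : ∑ b, q b * ε b = ∑ b, (q b - r b b) := by
    refine Finset.sum_congr rfl fun b _ => ?_
    rw [hεdef]
    by_cases h : q b = 0
    · have : r b b = 0 := le_antisymm (by rw [← h]; exact hrq b b) (hr b b)
      simp [h, this]
    · simp only [h, if_false]
      field_simp
  calc (∑ b, ∑ a, negMulLog (r a b)) - (∑ b, negMulLog (q b))
      = ∑ b, ((∑ a, negMulLog (r a b)) - negMulLog (q b)) := by rw [Finset.sum_sub_distrib]
    _ ≤ ∑ b, q b * qaryEntropy k' (ε b) := Finset.sum_le_sum fun b _ => stepA b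
    _ ≤ qaryEntropy k' (∑ b, q b * ε b) := stepB
    _ = qaryEntropy k' (∑ b, (q b - r b b)) := by rw [stepC]

section RV
variable {Ωb : Type*} [Fintype Ωb] {K L M : Type*} [Fintype K] [Fintype L] [Fintype M]
  [DecidableEq K] [DecidableEq L] [DecidableEq M]

variable (m : Ωb → ℝ)

/-- the joint fiber mass of a triple. -/
lemma fsum_triple_eq (U : Ωb → K) (V : Ωb → L) (W : Ωb → M) (k : K) (l : L) (w : M) :
    fsum m (fun ω => ((U ω, V ω), W ω)) ((k, l), w)
      = ∑ ω, if U ω = k ∧ V ω = l ∧ W ω = w then m ω else 0 :=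
  sum_if_congr m fun ω => by simp [Prod.ext_iff, and_assoc]

lemma fsum_triple_margV (U : Ωb → K) (V : Ωb → L) (W : Ωb → M) (k : K) (w : M) :
    ∑ l, fsum m (fun ω => ((U ω, V ω), W ω)) ((k, l), w)
      = fsum m (fun ω => (U ω, W ω)) (k, w) := by
  have h1 : ∀ l, fsum m (fun ω => ((U ω, V ω), W ω)) ((k, l), w)
      = ∑ ω, if V ω = l ∧ (U ω = k ∧ W ω = w) then m ω else 0 := fun l =>
    (fsum_triple_eq m U V W k l w).trans (sum_if_congr m fun ω => by tauto)
  simp only [h1]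
  rw [sum_if_and m V (fun ω => U ω = k ∧ W ω = w)]
  exact (sum_if_congr m fun ω => by simp [Prod.ext_iff]).symm

lemma fsum_triple_margU (U : Ωb → K) (V : Ωb → L) (W : Ωb → M) (l : L) (w : M) :
    ∑ k, fsum m (fun ω => ((U ω, V ω), W ω)) ((k, l), w)
      = fsum m (fun ω => (V ω, W ω)) (l, w) := by
  have h1 : ∀ k, fsum m (fun ω => ((U ω, V ω), W ω)) ((k, l), w)
      = ∑ ω, if U ω = k ∧ (V ω = l ∧ W ω = w) then m ω else 0 := fun k =>
    (fsum_triple_eq m U V W k l w).trans (sum_if_congr m fun ω => by tauto)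
  simp only [h1]
  rw [sum_if_and m U (fun ω => V ω = l ∧ W ω = w)]
  exact (sum_if_congr m fun ω => by simp [Prod.ext_iff]).symm

lemma fsum_triple_margUV (U : Ωb → K) (V : Ωb → L) (W : Ωb → M) (w : M) :
    ∑ k, ∑ l, fsum m (fun ω => ((U ω, V ω), W ω)) ((k, l), w) = fsum m W w := by
  have h1 : ∀ k, ∑ l, fsum m (fun ω => ((U ω, V ω), W ω)) ((k, l), w)
      = fsum m (fun ω => (U ω, W ω)) (k, w) := fun k => fsum_triple_margV m U V W k w
  simp only [h1]
  exact fsum_pair_left m U W w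

/-- conditional subadditivity: `H(U,V,W) + H(W) ≤ H(U,W) + H(V,W)`. -/
lemma condSubadd3 (hm : ∀ ω, 0 ≤ m ω) (U : Ωb → K) (V : Ωb → L) (W : Ωb → M) :
    entm m (fun ω => ((U ω, V ω), W ω)) + entm m W
      ≤ entm m (fun ω => (U ω, W ω)) + entm m (fun ω => (V ω, W ω)) := by
  set r : K → L → M → ℝ := fun k l w => fsum m (fun ω => ((U ω, V ω), W ω)) ((k, l), w) with hr
  have hr0 : ∀ k l w, 0 ≤ r k l w := fun k l w => fsum_nonneg hm _ _
  have h := gibbs_condSubadd r hr0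
  have e1 : entm m (fun ω => ((U ω, V ω), W ω)) = ∑ w, ∑ k, ∑ l, negMulLog (r k l w) := by
    rw [entm, Fintype.sum_prod_type]
    rw [Finset.sum_comm]
    exact Finset.sum_congr rfl fun w _ => Fintype.sum_prod_type _
  have e2 : entm m W = ∑ w, negMulLog (∑ k, ∑ l, r k l w) := by
    rw [entm]
    exact Finset.sum_congr rfl fun w _ => by rw [fsum_triple_margUV m U V W w]
  have e3 : entm m (fun ω => (U ω, W ω)) = ∑ w, ∑ k, negMulLog (∑ l, r k l w) := by
    rw [entm, Fintype.sum_prod_type, Finset.sum_comm]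
    exact Finset.sum_congr rfl fun w _ => Finset.sum_congr rfl fun k _ => by
      rw [fsum_triple_margV m U V W k w]
  have e4 : entm m (fun ω => (V ω, W ω)) = ∑ w, ∑ l, negMulLog (∑ k, r k l w) := by
    rw [entm, Fintype.sum_prod_type, Finset.sum_comm]
    exact Finset.sum_congr rfl fun w _ => Finset.sum_congr rfl fun l _ => by
      rw [fsum_triple_margU m U V W l w]
  rw [e1, e2, e3, e4]
  exact h

/-- conditioning on a function of `A` instead of `A`. -/
lemma cond_reduce (hm : ∀ ω, 0 ≤ m ω) (Yi : Ωb → L) (A : Ωb → M) (e : M → K) :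
    entm m (fun ω => (Yi ω, A ω)) + entm m (fun ω => e (A ω))
      ≤ entm m (fun ω => (Yi ω, e (A ω))) + entm m A := by
  have h := condSubadd3 m hm Yi A (fun ω => e (A ω))
  have r1 : entm m (fun ω => ((Yi ω, A ω), e (A ω))) = entm m (fun ω => (Yi ω, A ω)) := by
    have hg : Function.Injective (fun x : L × M => (x, e x.2)) := fun x y h => by
      simpa using congrArg Prod.fst h
    exact entm_comp_inj m hg (fun ω => (Yi ω, A ω))
  have r2 : entm m (fun ω => (A ω, e (A ω))) = entm m A := by
    have hg : Function.Injective (fun a : M => (a, e a)) := fun x y h => by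
      simpa using congrArg Prod.fst h
    exact entm_comp_inj m hg A
  rw [r1, r2] at h
  linarith

/-- entm-level Fano inequality. -/
lemma fano_entm {k' : ℕ} (hk : 2 ≤ k') (hcard : Fintype.card K ≤ k') (hm : ∀ ω, 0 ≤ m ω)
    (htot : ∑ ω, m ω = 1) (X Y : Ωb → K) :
    entm m (fun ω => (X ω, Y ω)) - entm m Y
      ≤ qaryEntropy k' (∑ ω, if X ω ≠ Y ω then m ω else 0) := by
  set r : K → K → ℝ := fun a b => fsum m (fun ω => (X ω, Y ω)) (a, b) with hrdef
  have hr0 : ∀ a b, 0 ≤ r a b := fun a b => fsum_nonneg hm _ _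
  have htot' : ∑ b, ∑ a, r a b = 1 := by
    rw [(Finset.sum_comm : ∑ b, ∑ a, r a b = ∑ a, ∑ b, r a b),
      ← Fintype.sum_prod_type (f := fun p : K × K => r p.1 p.2)]
    rw [show ∑ p : K × K, r p.1 p.2 = ∑ p : K × K, fsum m (fun ω => (X ω, Y ω)) p from
      Finset.sum_congr rfl fun p _ => rfl]
    rw [sum_fsum m (fun ω => (X ω, Y ω)), htot]
  have e1 : entm m (fun ω => (X ω, Y ω)) = ∑ b, ∑ a, negMulLog (r a b) := by
    rw [entm, Fintype.sum_prod_type, Finset.sum_comm]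
  have e2 : entm m Y = ∑ b, negMulLog (∑ a, r a b) := by
    rw [entm]
    exact Finset.sum_congr rfl fun b _ => by rw [fsum_pair_left m X Y b]
  have ediag : ∑ b, (( ∑ a, r a b) - r b b) = ∑ ω, if X ω ≠ Y ω then m ω else 0 := by
    have hdiag : ∑ b, r b b = ∑ ω, if X ω = Y ω then m ω else 0 := by
      have h1 : ∀ b, r b b = ∑ ω, if X ω = b ∧ X ω = Y ω then m ω else 0 := fun b =>
        sum_if_congr m fun ω => by
          constructor
          · rintro h
            obtain ⟨h1, h2⟩ : X ω = b ∧ Y ω = b := by simpa [Prod.ext_iff] using h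
            exact ⟨h1, h1.trans h2.symm⟩
          · rintro ⟨h1, h2⟩
            simp [Prod.ext_iff, h1, h2 ▸ h1]
      simp only [h1]
      exact sum_if_and m X (fun ω => X ω = Y ω)
    have h2 : ∑ b, ∑ a, r a b = ∑ ω, m ω := by rw [htot', htot]
    rw [Finset.sum_sub_distrib, h2, hdiag]
    rw [← Finset.sum_sub_distrib]
    exact Finset.sum_congr rfl fun ω _ => by by_cases h : X ω = Y ω <;> simp [h]
  rw [e1, e2, ← ediag]
  exact fano_pmf hk hcard r hr0 htot'

end RV

section Chain
variable {Ωb : Type*} [Fintype Ωb] {M : Type*} [Fintype M] [DecidableEq M]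

variable {ι : Type*} [Fintype ι] [DecidableEq ι] {Kf : ι → Type*} [∀ i, Fintype (Kf i)]
  [∀ i, DecidableEq (Kf i)]

lemma chain_condSubadd (m : Ωb → ℝ) (hm : ∀ ω, 0 ≤ m ω) (A : Ωb → M) (Yf : ∀ i, Ωb → Kf i)
    (T : Finset ι) :
    entm m (fun ω => ((fun j : {x // x ∈ T} => Yf j.1 ω), A ω))
      ≤ entm m A + ∑ i ∈ T, (entm m (fun ω => (Yf i ω, A ω)) - entm m A) := by
  classical
  induction T using Finset.induction_on with
  | empty =>
    haveI : Subsingleton (∀ j : {x // x ∈ (∅ : Finset ι)}, Kf j.1) :=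
      ⟨fun f g => funext fun j => absurd j.2 (Finset.notMem_empty _)⟩
    have hg : Function.Injective
        (Prod.snd : (∀ j : {x // x ∈ (∅ : Finset ι)}, Kf j.1) × M → M) := by
      intro x y h
      exact Prod.ext (Subsingleton.elim _ _) h
    have h0 : entm m A = entm m (fun ω => ((fun j : {x // x ∈ (∅ : Finset ι)} => Yf j.1 ω), A ω)) :=
      entm_comp_inj m hg (fun ω => ((fun j : {x // x ∈ (∅ : Finset ι)} => Yf j.1 ω), A ω))
    rw [← h0]
    simp
  | @insert i T hiT ih =>
    have hg : Function.Injective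
        (fun x : (∀ j : {y // y ∈ insert i T}, Kf j.1) × M =>
          ((x.1 ⟨i, Finset.mem_insert_self i T⟩,
            fun j : {y // y ∈ T} => x.1 ⟨j.1, Finset.mem_insert_of_mem j.2⟩), x.2)) := by
      intro x y h
      simp only [Prod.mk.injEq] at h
      obtain ⟨⟨h1, h2⟩, h3⟩ := h
      refine Prod.ext (funext fun j => ?_) h3
      rcases Finset.mem_insert.mp j.2 with hji | hjT
      · have hj : j = ⟨i, Finset.mem_insert_self i T⟩ := Subtype.ext hji
        rw [hj]
        exact h1
      · have := congrFun h2 ⟨j.1, hjT⟩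
        simpa using this
    have hrel : entm m (fun ω => ((fun j : {y // y ∈ insert i T} => Yf j.1 ω), A ω))
        = entm m (fun ω => ((Yf i ω, fun j : {y // y ∈ T} => Yf j.1 ω), A ω)) :=
      (entm_comp_inj m hg (fun ω => ((fun j : {y // y ∈ insert i T} => Yf j.1 ω), A ω))).symm
    have hsub := condSubadd3 m hm (Yf i) (fun ω (j : {y // y ∈ T}) => Yf j.1 ω) A
    rw [Finset.sum_insert hiT, hrel]
    have hpair : entm m (fun ω => ((fun j : {y // y ∈ T} => Yf j.1 ω), A ω))
        ≤ entm m A + ∑ i ∈ T, (entm m (fun ω => (Yf i ω, A ω)) - entm m A) := ih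
    linarith

end Chain

section Master
variable {Ωb : Type*} [Fintype Ωb]

variable {ι : Type*} [Fintype ι] [DecidableEq ι] {Kf : ι → Type*} [∀ i, Fintype (Kf i)]
  [∀ i, DecidableEq (Kf i)]

lemma master (m : Ωb → ℝ) (hm : ∀ ω, 0 ≤ m ω) (htot : ∑ ω, m ω = 1) {k' : ℕ} (hk : 2 ≤ k')
    (hcard : ∀ i, Fintype.card (Kf i) ≤ k') (X Y : ∀ i, Ωb → Kf i) :
    ((∑ i, entm m (X i)) - entm m (fun ω (j : ι) => X j ω))
      - ((∑ i, entm m (Y i)) - entm m (fun ω (j : ι) => Y j ω))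
      ≤ 2 * ∑ i, qaryEntropy k' (∑ ω, if X i ω ≠ Y i ω then m ω else 0) := by
  classical
  set δ : ι → ℝ := fun i => ∑ ω, if X i ω ≠ Y i ω then m ω else 0 with hδdef
  -- step 1
  have step1 : ∀ i, entm m (X i) - entm m (Y i) ≤ qaryEntropy k' (δ i) := by
    intro i
    have h1 : entm m (X i) ≤ entm m (fun ω => (X i ω, Y i ω)) := entm_le_pair m hm _ _
    have h2 : entm m (fun ω => (X i ω, Y i ω)) - entm m (Y i) ≤ qaryEntropy k' (δ i) :=
      fano_entm m hk (hcard i) hm htot (X i) (Y i)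
    linarith
  -- step 2
  have step2 : entm m (fun ω (j : ι) => Y j ω) - entm m (fun ω (j : ι) => X j ω)
      ≤ ∑ i, qaryEntropy k' (δ i) := by
    have h1 : entm m (fun ω (j : ι) => Y j ω)
        ≤ entm m (fun ω => ((fun j : ι => Y j ω), (fun j : ι => X j ω))) :=
      entm_le_pair m hm _ _
    have hg : Function.Injective
        (fun x : (∀ j : {y // y ∈ (Finset.univ : Finset ι)}, Kf j.1) × (∀ j : ι, Kf j) =>
          ((fun j : ι => x.1 ⟨j, Finset.mem_univ j⟩), x.2)) := by
      intro x y h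
      simp only [Prod.mk.injEq] at h
      obtain ⟨h1, h2⟩ := h
      refine Prod.ext (funext fun j => ?_) h2
      have hj : j = ⟨j.1, Finset.mem_univ j.1⟩ := Subtype.ext rfl
      rw [hj]
      exact congrFun h1 j.1
    have h2 : entm m (fun ω => ((fun j : ι => Y j ω), (fun j : ι => X j ω)))
        = entm m (fun ω => ((fun j : {y // y ∈ (Finset.univ : Finset ι)} => Y j.1 ω),
            (fun j : ι => X j ω))) :=
      entm_comp_inj m hg (fun ω => ((fun j : {y // y ∈ (Finset.univ : Finset ι)} => Y j.1 ω),
          (fun j : ι => X j ω)))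
    have h3 : entm m (fun ω => ((fun j : {y // y ∈ (Finset.univ : Finset ι)} => Y j.1 ω),
          (fun j : ι => X j ω)))
        ≤ entm m (fun ω (j : ι) => X j ω)
          + ∑ i, (entm m (fun ω => (Y i ω, (fun j : ι => X j ω))) - entm m (fun ω (j : ι) => X j ω)) :=
      chain_condSubadd m hm _ Y Finset.univ
    have h4 : ∀ i, entm m (fun ω => (Y i ω, (fun j : ι => X j ω))) - entm m (fun ω (j : ι) => X j ω)
        ≤ entm m (fun ω => (Y i ω, X i ω)) - entm m (X i) := by
      intro i
      have := cond_reduce m hm (Y i) (fun ω (j : ι) => X j ω) (fun a => a i)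
      have hclean : entm m (fun ω => (Y i ω, (fun j : ι => X j ω)))
          + entm m (X i)
          ≤ entm m (fun ω => (Y i ω, X i ω)) + entm m (fun ω (j : ι) => X j ω) := this
      linarith
    have h5 : ∀ i, entm m (fun ω => (Y i ω, X i ω)) - entm m (X i) ≤ qaryEntropy k' (δ i) := by
      intro i
      have := fano_entm m hk (hcard i) hm htot (Y i) (X i)
      have hδeq : (∑ ω, if Y i ω ≠ X i ω then m ω else 0) = δ i := by
        rw [hδdef]
        exact sum_if_congr m fun ω => ne_comm
      rw [hδeq] at this
      exact this
    have h6 : ∑ i, (entm m (fun ω => (Y i ω, (fun j : ι => X j ω)))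
          - entm m (fun ω (j : ι) => X j ω))
        ≤ ∑ i, qaryEntropy k' (δ i) :=
      Finset.sum_le_sum fun i _ => le_trans (h4 i) (h5 i)
    linarith
  have hsum1 : ∑ i, (entm m (X i) - entm m (Y i)) ≤ ∑ i, qaryEntropy k' (δ i) :=
    Finset.sum_le_sum fun i _ => step1 i
  rw [Finset.sum_sub_distrib] at hsum1
  linarith

end Master

section Bridge
variable {Ωb' : Type*} [Fintype Ωb'] [MeasurableSpace Ωb'] [MeasurableSingletonClass Ωb']

lemma meas_toReal (μ : Measure Ωb') [IsFiniteMeasure μ] (s : Set Ωb') [DecidablePred (· ∈ s)] :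
    (μ s).toReal = ∑ ω, if ω ∈ s then (μ {ω}).toReal else 0 := by
  have hs : s = ⋃ ω ∈ Finset.univ.filter (· ∈ s), ({ω} : Set Ωb') := by
    ext x; simp
  have h1 : μ s = ∑ ω ∈ Finset.univ.filter (· ∈ s), μ {ω} := by
    conv_lhs => rw [hs]
    exact measure_biUnion_finset
      (fun a _ b _ hab => Set.disjoint_singleton.mpr hab)
      (fun b _ => measurableSet_singleton b)
  rw [h1, ENNReal.toReal_sum (fun a _ => measure_ne_top μ _), Finset.sum_filter]

lemma shEnt_eq_entm (μ : Measure Ωb') [IsFiniteMeasure μ] {K : Type*} [Fintype K]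
    [DecidableEq K] (X : Ωb' → K) :
    shEnt μ X = entm (fun ω => (μ {ω}).toReal) X := by
  classical
  unfold shEnt entm fsum
  refine Finset.sum_congr rfl fun k _ => ?_
  congr 1
  rw [meas_toReal μ (X ⁻¹' {k})]
  exact sum_if_congr _ fun ω => by simp

lemma shEnt_map {Ωb₁ Ωb₂ : Type*} [MeasurableSpace Ωb₁] [MeasurableSpace Ωb₂]
    (μ : Measure Ωb₁) {f : Ωb₁ → Ωb₂} (hf : Measurable f) {K : Type*} [Fintype K]
    (Z : Ωb₂ → K) (hZ : ∀ k : K, MeasurableSet (Z ⁻¹' {k})) :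
    shEnt (μ.map f) Z = shEnt μ (fun ω => Z (f ω)) := by
  unfold shEnt
  refine Finset.sum_congr rfl fun k _ => ?_
  rw [Measure.map_apply hf (hZ k)]
  rfl

end Bridge

/-- If each `Kᵢ` has cardinality at most `k` (with `k ≥ 2`), `λ` is any
coupling of `μ, ν ∈ Pr(∏ᵢ Kᵢ)` and `δ := ∫ d_n dλ`, then
`|TC(μ) − TC(ν)| ≤ 2·(H(δ,1−δ) + δ·log(k−1))·n`, where `H(δ,1−δ)` is the binary entropy. -/
theorem tc_robust {n k : ℕ} (hk : 2 ≤ k) {K : Fin n → Type*} [∀ i, Fintype (K i)]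
    [∀ i, Nonempty (K i)] [∀ i, DecidableEq (K i)]
    [∀ i, MeasurableSpace (K i)] [∀ i, MeasurableSingletonClass (K i)]
    (hcard : ∀ i, Fintype.card (K i) ≤ k)
    (μ ν : Measure (∀ i, K i)) [IsProbabilityMeasure μ] [IsProbabilityMeasure ν]
    (lam : Measure ((∀ i, K i) × (∀ i, K i))) [IsProbabilityMeasure lam]
    (hfst : lam.map Prod.fst = μ) (hsnd : lam.map Prod.snd = ν)
    (δ : ℝ) (hδ : δ = ∫ p, hammingDist p.1 p.2 ∂lam) :
    |TC μ (fun i x => x i) - TC ν (fun i x => x i)| ≤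
      2 * ((Real.negMulLog δ + Real.negMulLog (1 - δ)) + δ * Real.log ((k : ℝ) - 1)) * n := by
  classical
  -- the zero entropy of the unique-valued joint in case n = 0
  rcases Nat.eq_zero_or_pos n with hn | hn
  · subst hn
    have hTC : ∀ (ρ : Measure (∀ i : Fin 0, K i)), IsProbabilityMeasure ρ →
        TC ρ (fun i x => x i) = 0 := by
      intro ρ hρ
      rw [TC]
      simp only [Finset.univ_eq_empty, Finset.sum_empty, zero_sub, neg_eq_zero]
      rw [shEnt]
      have : ∀ kk : (∀ i : Fin 0, K i), joint (fun i (x : ∀ j : Fin 0, K j) => x i) ⁻¹' {kk}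
          = Set.univ := by
        intro kk
        ext x
        simp [Subsingleton.elim (joint (fun i (x : ∀ j : Fin 0, K j) => x i) x) kk]
      simp [this, measure_univ]
    rw [hTC μ ‹_›, hTC ν ‹_›]
    simp
  · -- main case : 0 < n
    have hm : ∀ p : (∀ i, K i) × (∀ i, K i), 0 ≤ (lam {p}).toReal :=
      fun p => ENNReal.toReal_nonneg
    have htot : ∑ p : (∀ i, K i) × (∀ i, K i), (lam {p}).toReal = 1 := by
      have h1 := meas_toReal lam Set.univ
      rw [measure_univ] at h1
      simpa using h1.symm
    -- bridge TC μ and TC ν to entm quantities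
    have bridgeμ : TC μ (fun i x => x i)
        = (∑ i, entm (fun p : (∀ i, K i) × (∀ i, K i) => (lam {p}).toReal) (fun p => p.1 i))
          - entm (fun p : (∀ i, K i) × (∀ i, K i) => (lam {p}).toReal)
              (fun p (j : Fin n) => p.1 j) := by
      rw [TC, ← hfst]
      congr 1
      · refine Finset.sum_congr rfl fun i _ => ?_
        rw [shEnt_map lam measurable_fst _ (fun kk => MeasurableSet.of_discrete)]
        exact shEnt_eq_entm lam (fun p : (∀ i, K i) × (∀ i, K i) => p.1 i)
      · rw [shEnt_map lam measurable_fst _ (fun kk => MeasurableSet.of_discrete)]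
        exact shEnt_eq_entm lam (fun (p : (∀ i, K i) × (∀ i, K i)) (j : Fin n) => p.1 j)
    have bridgeν : TC ν (fun i x => x i)
        = (∑ i, entm (fun p : (∀ i, K i) × (∀ i, K i) => (lam {p}).toReal) (fun p => p.2 i))
          - entm (fun p : (∀ i, K i) × (∀ i, K i) => (lam {p}).toReal)
              (fun p (j : Fin n) => p.2 j) := by
      rw [TC, ← hsnd]
      congr 1
      · refine Finset.sum_congr rfl fun i _ => ?_
        rw [shEnt_map lam measurable_snd _ (fun kk => MeasurableSet.of_discrete)]
        exact shEnt_eq_entm lam (fun p : (∀ i, K i) × (∀ i, K i) => p.2 i)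
      · rw [shEnt_map lam measurable_snd _ (fun kk => MeasurableSet.of_discrete)]
        exact shEnt_eq_entm lam (fun (p : (∀ i, K i) × (∀ i, K i)) (j : Fin n) => p.2 j)
    -- master inequality in both directions
    have hmaster1 :
        ((∑ i, entm (fun p : (∀ i, K i) × (∀ i, K i) => (lam {p}).toReal) (fun p => p.1 i))
          - entm (fun p : (∀ i, K i) × (∀ i, K i) => (lam {p}).toReal)
              (fun p (j : Fin n) => p.1 j))
        - ((∑ i, entm (fun p : (∀ i, K i) × (∀ i, K i) => (lam {p}).toReal) (fun p => p.2 i))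
          - entm (fun p : (∀ i, K i) × (∀ i, K i) => (lam {p}).toReal)
              (fun p (j : Fin n) => p.2 j))
        ≤ 2 * ∑ i, qaryEntropy k (∑ p : (∀ i, K i) × (∀ i, K i),
            if p.1 i ≠ p.2 i then (lam {p}).toReal else 0) :=
      master _ hm htot hk hcard (fun i p => p.1 i) (fun i p => p.2 i)
    have hmaster2 :
        ((∑ i, entm (fun p : (∀ i, K i) × (∀ i, K i) => (lam {p}).toReal) (fun p => p.2 i))
          - entm (fun p : (∀ i, K i) × (∀ i, K i) => (lam {p}).toReal)
              (fun p (j : Fin n) => p.2 j))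
        - ((∑ i, entm (fun p : (∀ i, K i) × (∀ i, K i) => (lam {p}).toReal) (fun p => p.1 i))
          - entm (fun p : (∀ i, K i) × (∀ i, K i) => (lam {p}).toReal)
              (fun p (j : Fin n) => p.1 j))
        ≤ 2 * ∑ i, qaryEntropy k (∑ p : (∀ i, K i) × (∀ i, K i),
            if p.2 i ≠ p.1 i then (lam {p}).toReal else 0) :=
      master _ hm htot hk hcard (fun i p => p.2 i) (fun i p => p.1 i)
    have hflip : ∀ i : Fin n, (∑ p : (∀ i, K i) × (∀ i, K i),
          if p.2 i ≠ p.1 i then (lam {p}).toReal else 0)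
        = ∑ p : (∀ i, K i) × (∀ i, K i), if p.1 i ≠ p.2 i then (lam {p}).toReal else 0 :=
      fun i => sum_if_congr _ fun p => ne_comm
    simp only [hflip] at hmaster2
    -- abs bound
    have habs : |TC μ (fun i x => x i) - TC ν (fun i x => x i)|
        ≤ 2 * ∑ i, qaryEntropy k (∑ p : (∀ i, K i) × (∀ i, K i),
            if p.1 i ≠ p.2 i then (lam {p}).toReal else 0) := by
      rw [bridgeμ, bridgeν, abs_sub_le_iff]
      exact ⟨hmaster1, hmaster2⟩
    -- compute δ from the integral
    have hn' : (0:ℝ) < n := by exact_mod_cast hn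
    have hham : ∀ p : (∀ i, K i) × (∀ i, K i),
        hammingDist p.1 p.2 = (∑ i, if p.1 i ≠ p.2 i then (1:ℝ) else 0) / n := by
      intro p
      rw [hammingDist, Finset.card_filter]
      push_cast
      ring
    have hδsum : δ = (∑ i, ∑ p : (∀ i, K i) × (∀ i, K i),
        if p.1 i ≠ p.2 i then (lam {p}).toReal else 0) / n := by
      rw [hδ, integral_fintype (Integrable.of_finite)]
      simp only [smul_eq_mul, hham, Measure.real]
      have step : ∀ p : (∀ i, K i) × (∀ i, K i),
          (lam {p}).toReal * ((∑ i, if p.1 i ≠ p.2 i then (1:ℝ) else 0) / n)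
          = (∑ i, if p.1 i ≠ p.2 i then (lam {p}).toReal else 0) / n := by
        intro p
        rw [← mul_div_assoc]
        congr 1
        rw [Finset.mul_sum]
        exact Finset.sum_congr rfl fun i _ => by
          by_cases h : p.1 i ≠ p.2 i <;> simp [h]
      simp only [step]
      rw [← Finset.sum_div, Finset.sum_comm]
    -- Jensen step
    have hδi0 : ∀ i : Fin n, 0 ≤ ∑ p : (∀ i, K i) × (∀ i, K i),
        if p.1 i ≠ p.2 i then (lam {p}).toReal else 0 := by
      intro i
      refine Finset.sum_nonneg fun p _ => ?_
      by_cases h : p.1 i ≠ p.2 i <;> simp [h, hm p]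
    have hδi1 : ∀ i : Fin n, (∑ p : (∀ i, K i) × (∀ i, K i),
        if p.1 i ≠ p.2 i then (lam {p}).toReal else 0) ≤ 1 := by
      intro i
      rw [← htot]
      refine Finset.sum_le_sum fun p _ => ?_
      by_cases h : p.1 i ≠ p.2 i <;> simp [h, hm p]
    have hw : ∑ _i : Fin n, (n:ℝ)⁻¹ = 1 := by
      rw [Finset.sum_const, Finset.card_univ, Fintype.card_fin, nsmul_eq_mul,
        mul_inv_cancel₀ hn'.ne']
    have hjen := (strictConcaveOn_qaryEntropy (q := k)).concaveOn.le_map_sum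
      (t := Finset.univ) (w := fun _ : Fin n => (n:ℝ)⁻¹)
      (p := fun i => ∑ p : (∀ i, K i) × (∀ i, K i),
        if p.1 i ≠ p.2 i then (lam {p}).toReal else 0)
      (fun i _ => by positivity) hw
      (fun i _ => Set.mem_Icc.mpr ⟨hδi0 i, hδi1 i⟩)
    have harg : (∑ i : Fin n, (n:ℝ)⁻¹ • ∑ p : (∀ i, K i) × (∀ i, K i),
        if p.1 i ≠ p.2 i then (lam {p}).toReal else 0) = δ := by
      simp only [smul_eq_mul]
      rw [← Finset.mul_sum, hδsum, div_eq_inv_mul]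
    rw [harg] at hjen
    have hfinal1 : (∑ i : Fin n, qaryEntropy k (∑ p : (∀ i, K i) × (∀ i, K i),
        if p.1 i ≠ p.2 i then (lam {p}).toReal else 0)) ≤ n * qaryEntropy k δ := by
      have hexp : (∑ i : Fin n, qaryEntropy k (∑ p : (∀ i, K i) × (∀ i, K i),
          if p.1 i ≠ p.2 i then (lam {p}).toReal else 0))
          = n * ∑ i : Fin n, (n:ℝ)⁻¹ • qaryEntropy k (∑ p : (∀ i, K i) × (∀ i, K i),
            if p.1 i ≠ p.2 i then (lam {p}).toReal else 0) := by
        rw [Finset.mul_sum]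
        refine Finset.sum_congr rfl fun i _ => ?_
        rw [smul_eq_mul, ← mul_assoc, mul_inv_cancel₀ hn'.ne', one_mul]
      rw [hexp]
      exact mul_le_mul_of_nonneg_left hjen hn'.le
    have hqary : qaryEntropy k δ
        = (negMulLog δ + negMulLog (1 - δ)) + δ * log ((k:ℝ) - 1) := by
      rw [qaryEntropy, binEntropy_eq_negMulLog_add_negMulLog_one_sub]
      have hc : ((k - 1 : ℤ) : ℝ) = (k : ℝ) - 1 := by push_cast; ring
      rw [hc]
      ring
    calc |TC μ (fun i x => x i) - TC ν (fun i x => x i)|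
        ≤ 2 * ∑ i, qaryEntropy k (∑ p : (∀ i, K i) × (∀ i, K i),
            if p.1 i ≠ p.2 i then (lam {p}).toReal else 0) := habs
      _ ≤ 2 * (n * qaryEntropy k δ) := by linarith
      _ = 2 * ((negMulLog δ + negMulLog (1 - δ)) + δ * log ((k:ℝ) - 1)) * n := by
          rw [hqary]; ring


end Corr
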